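/- Let f : ℕ → [-1,1] be a function and h ≥ 2 an integer. Suppose that |∑_{n ≤ y} f(n)f(n+1)| ≤ (1-δ)y + C for all y ≥ 1, for some δ ∈ (0,1] and constant C, and that f is completely multiplicative. Then |∑_{n ≤ x} f(n)f(n+h)| ≤ (1 - 1/h)x + 1 + (1-δ)(x/h) + C for all x ≥ 1; in particular |∑_{n ≤ x} f(n)f(n+h)| ≤ (1 - δ/h)x + C + 1. -/

import Mathlib

open Finset

/-- Deduction of cancellation at shift `h` from cancellation at shift `1`, for a
completely multiplicative `f : ℕ → [-1,1]`. -/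
theorem shift_h_bound (f : ℕ → ℝ) (hbd : ∀ n, |f n| ≤ 1) (hf1 : f 1 = 1)
    (hmul : ∀ m n, f (m * n) = f m * f n)
    (h : ℕ) (hh : 2 ≤ h) (δ C : ℝ) (hδ0 : 0 < δ) (hδ1 : δ ≤ 1) (hC : 0 ≤ C)
    (hyp : ∀ y : ℕ, 1 ≤ y →
      |∑ n ∈ Finset.Icc 1 y, f n * f (n + 1)| ≤ (1 - δ) * y + C) :
    ∀ x : ℕ, 1 ≤ x →
      |∑ n ∈ Finset.Icc 1 x, f n * f (n + h)| ≤
          (1 - 1 / (h : ℝ)) * x + 1 + (1 - δ) * ((x : ℝ) / h) + C ∧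
      |∑ n ∈ Finset.Icc 1 x, f n * f (n + h)| ≤ (1 - δ / h) * x + C + 1 := by
  intro x hx
  have hh0 : 0 < h := by omega
  have hhR : (0:ℝ) < h := by exact_mod_cast hh0
  set q := x / h with hq
  -- split the sum
  have hsplit : ∑ n ∈ Finset.Icc 1 x, f n * f (n + h) =
      (∑ n ∈ (Finset.Icc 1 x).filter (fun n => h ∣ n), f n * f (n + h)) +
      (∑ n ∈ (Finset.Icc 1 x).filter (fun n => ¬ h ∣ n), f n * f (n + h)) := by
    rw [Finset.sum_filter_add_sum_filter_not]
  -- sum over multiples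
  have hA : ∑ n ∈ (Finset.Icc 1 x).filter (fun n => h ∣ n), f n * f (n + h)
      = f h ^ 2 * ∑ m ∈ Finset.Icc 1 q, f m * f (m + 1) := by
    rw [Finset.mul_sum]
    refine Finset.sum_nbij' (fun n => n / h) (fun m => h * m) ?_ ?_ ?_ ?_ ?_
    · intro n hn
      simp only [Finset.mem_filter, Finset.mem_Icc] at hn
      obtain ⟨⟨h1, h2⟩, hd⟩ := hn
      simp only [Finset.mem_Icc]
      constructor
      · exact (Nat.one_le_div_iff hh0).mpr (Nat.le_of_dvd h1 hd)
      · exact Nat.div_le_div_right h2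
    · intro m hm
      simp only [Finset.mem_Icc] at hm
      simp only [Finset.mem_filter, Finset.mem_Icc]
      refine ⟨⟨by nlinarith [hm.1], ?_⟩, Dvd.intro m rfl⟩
      calc h * m ≤ h * q := Nat.mul_le_mul_left h hm.2
        _ ≤ x := Nat.mul_div_le x h
    · intro n hn
      simp only [Finset.mem_filter] at hn
      exact Nat.mul_div_cancel' hn.2
    · intro m hm
      exact Nat.mul_div_cancel_left m hh0
    · intro n hn
      simp only [Finset.mem_filter] at hn
      obtain ⟨m, rfl⟩ := hn.2
      have h1 : h * m / h = m := Nat.mul_div_cancel_left m hh0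
      have h2 : h * m + h = h * (m + 1) := by ring
      simp only [h1, h2, hmul]
      ring
  -- bound on the multiple part
  have hSq : |∑ m ∈ Finset.Icc 1 q, f m * f (m + 1)| ≤ (1 - δ) * q + C := by
    rcases Nat.eq_zero_or_pos q with hq0 | hq1
    · simp [hq0]
      positivity
    · exact hyp q hq1
  have hfh2 : f h ^ 2 ≤ 1 := by
    have := hbd h
    nlinarith [abs_nonneg (f h), le_abs_self (f h), neg_abs_le (f h)]
  have hqle : (q : ℝ) ≤ (x : ℝ) / h := by
    rw [le_div_iff₀ hhR]
    exact_mod_cast Nat.div_mul_le_self x h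
  have hAbd : |∑ n ∈ (Finset.Icc 1 x).filter (fun n => h ∣ n), f n * f (n + h)|
      ≤ (1 - δ) * ((x : ℝ) / h) + C := by
    rw [hA, abs_mul, abs_pow, sq_abs]
    calc f h ^ 2 * |∑ m ∈ Finset.Icc 1 q, f m * f (m + 1)|
        ≤ 1 * |∑ m ∈ Finset.Icc 1 q, f m * f (m + 1)| := by
          apply mul_le_mul_of_nonneg_right hfh2 (abs_nonneg _)
      _ ≤ (1 - δ) * q + C := by rw [one_mul]; exact hSq
      _ ≤ (1 - δ) * ((x : ℝ) / h) + C := by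
          have : (1 - δ) * (q : ℝ) ≤ (1 - δ) * ((x : ℝ) / h) :=
            mul_le_mul_of_nonneg_left hqle (by linarith)
          linarith
  -- bound on the non-multiple part
  have hcard : ((Finset.Icc 1 x).filter (fun n => ¬ h ∣ n)).card = x - q := by
    have h1 : ((Finset.Icc 1 x).filter (fun n => h ∣ n)).card = q := by
      have : Finset.Icc 1 x = Finset.Ioc 0 x := rfl
      rw [this]
      exact Nat.Ioc_filter_dvd_card_eq_div x h
    have h2 := Finset.card_filter_add_card_filter_not
      (s := Finset.Icc 1 x) (p := fun n => h ∣ n)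
    rw [Nat.card_Icc] at h2
    omega
  have hBbd : |∑ n ∈ (Finset.Icc 1 x).filter (fun n => ¬ h ∣ n), f n * f (n + h)|
      ≤ ((x : ℝ) - q) := by
    calc |∑ n ∈ (Finset.Icc 1 x).filter (fun n => ¬ h ∣ n), f n * f (n + h)|
        ≤ ∑ n ∈ (Finset.Icc 1 x).filter (fun n => ¬ h ∣ n), |f n * f (n + h)| :=
          Finset.abs_sum_le_sum_abs _ _
      _ ≤ ∑ n ∈ (Finset.Icc 1 x).filter (fun n => ¬ h ∣ n), 1 := by
          apply Finset.sum_le_sum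
          intro n _
          rw [abs_mul]
          exact mul_le_one₀ (hbd n) (abs_nonneg _) (hbd (n + h))
      _ = ((x - q : ℕ) : ℝ) := by rw [Finset.sum_const, hcard]; simp
      _ = ((x : ℝ) - q) := by
          have : q ≤ x := Nat.div_le_self x h
          push_cast [Nat.cast_sub this]
          ring
  have hxq : (x : ℝ) - q ≤ (1 - 1 / (h : ℝ)) * x + 1 := by
    have hlt : (x : ℝ) < h * (q + 1) := by
      have : x < h * (q + 1) := by
        rw [Nat.mul_add, Nat.mul_one, hq]
        have h1 := Nat.div_add_mod x h
        have h2 := Nat.mod_lt x hh0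
        omega
      exact_mod_cast this
    have : (x : ℝ) / h - 1 < q := by
      rw [div_sub_one (ne_of_gt hhR), div_lt_iff₀ hhR]
      nlinarith
    have heq : (1 - 1 / (h : ℝ)) * x = x - x / h := by field_simp
    linarith
  have main : |∑ n ∈ Finset.Icc 1 x, f n * f (n + h)| ≤
      (1 - 1 / (h : ℝ)) * x + 1 + (1 - δ) * ((x : ℝ) / h) + C := by
    rw [hsplit]
    calc |_ + _| ≤ _ + _ := abs_add_le _ _
      _ ≤ ((1 - δ) * ((x : ℝ) / h) + C) + ((x : ℝ) - q) := add_le_add hAbd hBbd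
      _ ≤ _ := by linarith
  refine ⟨main, ?_⟩
  have heq : (1 - 1 / (h : ℝ)) * x + 1 + (1 - δ) * ((x : ℝ) / h) + C
      = (1 - δ / h) * x + C + 1 := by field_simp; ring
  linarith
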